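/- Let 0 < a < 1 and let f : ℝ → ℂ be a Schwartz function with C_a(f) < ∞ and C_a(f̂) < ∞. Then for every integer j ≥ 0 the j-th derivatives satisfy the uniform bounds ‖D^j f‖_{L^∞(ℝ)} ≤ (2π)^j A_j C_a(f̂) and ‖D^j f̂‖_{L^∞(ℝ)} ≤ (2π)^j A_j C_a(f), where A_j = 2^{-j} a^{-j/2} √((2j-1)!!) (2a)^{-1/4} and (2j-1)!! denotes the odd double factorial (with (-1)!! = 1). -/

import Mathlib

open MeasureTheory Real FourierTransform Complex
lemma aux_integrable_pow {b : ℝ} (hb : 0 < b) (n : ℕ) :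
    Integrable fun x : ℝ => x ^ n * Real.exp (-b * x ^ 2) := by
  have h := integrable_rpow_mul_exp_neg_mul_sq hb (s := n)
    (lt_of_lt_of_le neg_one_lt_zero (Nat.cast_nonneg n))
  simpa [Real.rpow_natCast] using h

lemma gaussian_moment {b : ℝ} (hb : 0 < b) :
    ∀ j : ℕ, ∫ x : ℝ, x ^ (2 * j) * Real.exp (-b * x ^ 2)
      = (Nat.doubleFactorial (2 * j - 1) : ℝ) / (2 * b) ^ j * Real.sqrt (π / b) := by
  intro j
  induction j with
  | zero => simpa [Nat.doubleFactorial, neg_mul] using integral_gaussian b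
  | succ j ih =>
    have key : ∫ x : ℝ, (((2 * j + 1 : ℕ) : ℝ) * (x ^ (2 * j) * Real.exp (-b * x ^ 2))
        - 2 * b * (x ^ (2 * j + 2) * Real.exp (-b * x ^ 2))) = 0 := by
      apply integral_eq_zero_of_hasDerivAt_of_integrable
        (f := fun x : ℝ => x ^ (2 * j + 1) * Real.exp (-b * x ^ 2))
      · intro x
        have h1 : HasDerivAt (fun x : ℝ => x ^ (2 * j + 1))
            (((2 * j + 1 : ℕ) : ℝ) * x ^ (2 * j)) x := by
          simpa using hasDerivAt_pow (2 * j + 1) x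
        have h2 : HasDerivAt (fun x : ℝ => Real.exp (-b * x ^ 2))
            (Real.exp (-b * x ^ 2) * (-b * (2 * x))) x := by
          have h3 : HasDerivAt (fun x : ℝ => -b * x ^ 2) (-b * (2 * x)) x := by
            simpa using (hasDerivAt_pow 2 x).const_mul (-b)
          exact h3.exp
        have := h1.fun_mul h2
        refine this.congr_deriv ?_
        push_cast
        ring
      · exact ((aux_integrable_pow hb (2 * j)).const_mul _).sub
          ((aux_integrable_pow hb (2 * j + 2)).const_mul _)
      · exact aux_integrable_pow hb (2 * j + 1)
    rw [integral_sub ((aux_integrable_pow hb (2 * j)).const_mul _)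
        ((aux_integrable_pow hb (2 * j + 2)).const_mul _),
      integral_const_mul, integral_const_mul, sub_eq_zero] at key
    have hstep : ∫ x : ℝ, x ^ (2 * (j + 1)) * Real.exp (-b * x ^ 2)
        = ((2 * j + 1 : ℝ)) / (2 * b) * ∫ x : ℝ, x ^ (2 * j) * Real.exp (-b * x ^ 2) := by
      have h2j : 2 * (j + 1) = 2 * j + 2 := by ring
      rw [h2j]
      have hb2 : (2 * b) ≠ 0 := by positivity
      push_cast at key
      rw [div_mul_eq_mul_div, eq_div_iff hb2]
      linarith [key]
    have hdf : (Nat.doubleFactorial (2 * (j + 1) - 1) : ℝ)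
        = (2 * j + 1 : ℝ) * (Nat.doubleFactorial (2 * j - 1) : ℝ) := by
      cases j with
      | zero => simp [Nat.doubleFactorial]
      | succ k =>
        have h1 : 2 * (k + 1 + 1) - 1 = (2 * (k + 1) - 1) + 2 := by omega
        rw [h1, Nat.doubleFactorial_add_two]
        have h2 : 2 * (k + 1) - 1 + 2 = 2 * (k + 1) + 1 := by omega
        rw [h2]
        push_cast
        ring
    rw [hstep, ih, hdf, pow_succ]
    have hb2 : (2 * b) ≠ 0 := by positivity
    field_simp

lemma schwartz_pow_smul_integrable (g : SchwartzMap ℝ ℂ) (n : ℕ) :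
    Integrable fun x : ℝ => x ^ n • g x := by
  apply (g.integrable_pow_mul volume n).mono'
  · exact ((continuous_pow n).smul g.continuous).aestronglyMeasurable
  · filter_upwards with x
    simp [norm_smul]

lemma sqrt_moment_le {a : ℝ} (ha0 : 0 < a) (j : ℕ) :
    (∫ x : ℝ, x ^ (2 * j) * Real.exp (-(2 * a * π) * x ^ 2)) ^ ((1 : ℝ) / 2)
      ≤ (2 : ℝ) ^ (-(j : ℝ)) * a ^ (-(j : ℝ) / 2) *
          Real.sqrt ((Nat.doubleFactorial (2 * j - 1) : ℝ)) * (2 * a) ^ (-(1 : ℝ) / 4) := by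
  have hb : (0 : ℝ) < 2 * a * π := by positivity
  rw [gaussian_moment hb j]
  set D : ℝ := (Nat.doubleFactorial (2 * j - 1) : ℝ) with hD
  have hD0 : 0 ≤ D := Nat.cast_nonneg _
  set K : ℝ := (2 : ℝ) ^ (-(j : ℝ)) * a ^ (-(j : ℝ) / 2) * Real.sqrt D * (2 * a) ^ (-(1 : ℝ) / 4)
    with hK
  have hK0 : 0 ≤ K := by positivity
  have hsqrt : Real.sqrt (π / (2 * a * π)) = (2 * a) ^ (-(1 : ℝ) / 2) := by
    have h1 : π / (2 * a * π) = (2 * a)⁻¹ := by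
      field_simp
    rw [h1, Real.sqrt_eq_rpow, ← Real.rpow_neg_one (2 * a),
      ← Real.rpow_mul (by positivity : (0:ℝ) ≤ 2 * a)]
    norm_num
  rw [hsqrt]
  have hKsq : K ^ 2 = D * ((2:ℝ) ^ (2 * j) * a ^ j)⁻¹ * (2 * a) ^ (-(1:ℝ) / 2) := by
    rw [hK]
    have e1 : ((2:ℝ) ^ (-(j:ℝ))) ^ 2 = ((2:ℝ) ^ (2 * j) : ℝ)⁻¹ := by
      rw [← Real.rpow_natCast ((2:ℝ) ^ (-(j:ℝ))) 2, ← Real.rpow_mul (by norm_num : (0:ℝ) ≤ 2),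
        ← Real.rpow_natCast (2:ℝ) (2 * j), ← Real.rpow_neg (by norm_num : (0:ℝ) ≤ 2)]
      push_cast
      ring_nf
    have e2 : (a ^ (-(j:ℝ) / 2)) ^ 2 = (a ^ j : ℝ)⁻¹ := by
      rw [← Real.rpow_natCast (a ^ (-(j:ℝ) / 2)) 2, ← Real.rpow_mul ha0.le,
        ← Real.rpow_natCast a j, ← Real.rpow_neg ha0.le]
      push_cast
      ring_nf
    have e3 : ((2 * a) ^ (-(1:ℝ) / 4)) ^ 2 = (2 * a) ^ (-(1:ℝ) / 2) := by
      rw [← Real.rpow_natCast ((2 * a) ^ (-(1:ℝ) / 4)) 2,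
        ← Real.rpow_mul (by positivity : (0:ℝ) ≤ 2 * a)]
      norm_num
    have e4 : Real.sqrt D ^ 2 = D := Real.sq_sqrt hD0
    calc K ^ 2 = ((2:ℝ) ^ (-(j:ℝ))) ^ 2 * (a ^ (-(j:ℝ) / 2)) ^ 2 * Real.sqrt D ^ 2 *
        ((2 * a) ^ (-(1:ℝ) / 4)) ^ 2 := by ring
      _ = _ := by rw [e1, e2, e3, e4]; ring
  have hM : D / (2 * (2 * a * π)) ^ j * (2 * a) ^ (-(1:ℝ) / 2) ≤ K ^ 2 := by
    rw [hKsq]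
    have hc : (0:ℝ) < (2 * a) ^ (-(1:ℝ) / 2) := Real.rpow_pos_of_pos (by positivity) _
    have hpow : (2:ℝ) ^ (2 * j) * a ^ j ≤ (2 * (2 * a * π)) ^ j := by
      have h1 : (2:ℝ) ^ (2 * j) * a ^ j = ((4:ℝ) * a) ^ j := by
        rw [mul_pow, pow_mul]
        norm_num
      rw [h1]
      apply pow_le_pow_left₀ (by positivity)
      nlinarith [Real.pi_gt_three, ha0]
    have h2 : D / (2 * (2 * a * π)) ^ j ≤ D / ((2:ℝ) ^ (2 * j) * a ^ j) := by
      apply div_le_div_of_nonneg_left hD0 (by positivity) hpow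
    calc D / (2 * (2 * a * π)) ^ j * (2 * a) ^ (-(1:ℝ) / 2)
        ≤ D / ((2:ℝ) ^ (2 * j) * a ^ j) * (2 * a) ^ (-(1:ℝ) / 2) := by
          exact mul_le_mul_of_nonneg_right h2 hc.le
      _ = D * ((2:ℝ) ^ (2 * j) * a ^ j)⁻¹ * (2 * a) ^ (-(1:ℝ) / 2) := by rw [div_eq_mul_inv]
  have hM0 : 0 ≤ D / (2 * (2 * a * π)) ^ j * (2 * a) ^ (-(1:ℝ) / 2) := by positivity
  calc (D / (2 * (2 * a * π)) ^ j * (2 * a) ^ (-(1:ℝ) / 2)) ^ ((1:ℝ) / 2)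
      ≤ (K ^ 2) ^ ((1:ℝ) / 2) := Real.rpow_le_rpow hM0 hM (by norm_num)
    _ = K := by rw [← Real.sqrt_eq_rpow, Real.sqrt_sq hK0]

lemma master {a : ℝ} (ha0 : 0 < a) (j : ℕ) (g : ℝ → ℂ)
    (hg : ∀ n : ℕ, Integrable (fun x : ℝ => x ^ n • g x))
    (hC : Integrable fun x : ℝ => ‖g x‖ ^ 2 * Real.exp (2 * a * π * x ^ 2)) :
    ∀ ξ : ℝ, ‖iteratedDeriv j (𝓕 g) ξ‖ ≤
      (2 * π) ^ j * ((2 : ℝ) ^ (-(j : ℝ)) * a ^ (-(j : ℝ) / 2) *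
        Real.sqrt ((Nat.doubleFactorial (2 * j - 1) : ℝ)) * (2 * a) ^ (-(1 : ℝ) / 4)) *
      (∫ x : ℝ, ‖g x‖ ^ 2 * Real.exp (2 * a * π * x ^ 2)) ^ ((1 : ℝ) / 2) := by
  intro ξ
  have hD := Real.iteratedDeriv_fourier (f := g) (N := (⊤ : ℕ∞))
    (fun n _ => hg n) (le_top (a := (j : ℕ∞)))
  rw [hD]
  set K : ℝ := (2 : ℝ) ^ (-(j : ℝ)) * a ^ (-(j : ℝ) / 2) *
    Real.sqrt ((Nat.doubleFactorial (2 * j - 1) : ℝ)) * (2 * a) ^ (-(1 : ℝ) / 4) with hK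
  set C : ℝ := ∫ x : ℝ, ‖g x‖ ^ 2 * Real.exp (2 * a * π * x ^ 2) with hCdef
  have hC0 : 0 ≤ C := integral_nonneg fun x => by positivity
  set F : ℝ → ℝ := fun x => |x| ^ j * Real.exp (-(a * π) * x ^ 2) with hF
  set G : ℝ → ℝ := fun x => ‖g x‖ * Real.exp (a * π * x ^ 2) with hG
  have hgm : AEStronglyMeasurable g volume := by
    have := (hg 0).aestronglyMeasurable
    simpa using this
  have hsq : ∀ x : ℝ, F x ^ 2 = x ^ (2 * j) * Real.exp (-(2 * a * π) * x ^ 2) := by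
    intro x
    have h1 : (|x| ^ j) ^ 2 = x ^ (2 * j) := by
      rw [← pow_mul, mul_comm j 2, pow_mul, _root_.sq_abs, ← pow_mul]
    have h2 : (Real.exp (-(a * π) * x ^ 2)) ^ 2 = Real.exp (-(2 * a * π) * x ^ 2) := by
      rw [sq, ← Real.exp_add]
      congr 1
      ring
    rw [hF, mul_pow, h1, h2]
  have hGsq : ∀ x : ℝ, G x ^ 2 = ‖g x‖ ^ 2 * Real.exp (2 * a * π * x ^ 2) := by
    intro x
    have h2 : (Real.exp (a * π * x ^ 2)) ^ 2 = Real.exp (2 * a * π * x ^ 2) := by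
      rw [sq, ← Real.exp_add]
      congr 1
      ring
    rw [hG, mul_pow, h2]
  have hFmem : MemLp F (ENNReal.ofReal 2) := by
    have hmeas : AEStronglyMeasurable F volume := by
      apply Continuous.aestronglyMeasurable
      fun_prop
    rw [show ENNReal.ofReal (2 : ℝ) = 2 by norm_num]
    rw [memLp_two_iff_integrable_sq hmeas]
    exact (aux_integrable_pow (show (0:ℝ) < 2 * a * π by positivity) (2 * j)).congr
      (Filter.Eventually.of_forall fun x => (hsq x).symm)
  have hGmem : MemLp G (ENNReal.ofReal 2) := by
    have hmeas : AEStronglyMeasurable G volume := by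
      exact hgm.norm.mul (Continuous.aestronglyMeasurable (by fun_prop))
    rw [show ENNReal.ofReal (2 : ℝ) = 2 by norm_num]
    rw [memLp_two_iff_integrable_sq hmeas]
    exact hC.congr (Filter.Eventually.of_forall fun x => (hGsq x).symm)
  have hCS := integral_mul_le_Lp_mul_Lq_of_nonneg
    Real.HolderConjugate.two_two
    (Filter.Eventually.of_forall fun x => by positivity)
    (Filter.Eventually.of_forall fun x => by positivity) hFmem hGmem
  simp only [Real.rpow_two] at hCS
  have hFG : ∀ x : ℝ, F x * G x = |x| ^ j * ‖g x‖ := by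
    intro x
    have h1 : Real.exp (-(a * π) * x ^ 2) * Real.exp (a * π * x ^ 2) = 1 := by
      rw [← Real.exp_add, show -(a * π) * x ^ 2 + a * π * x ^ 2 = 0 by ring, Real.exp_zero]
    calc F x * G x
        = |x| ^ j * ‖g x‖ * (Real.exp (-(a * π) * x ^ 2) * Real.exp (a * π * x ^ 2)) := by
          rw [hF, hG]; ring
      _ = |x| ^ j * ‖g x‖ := by rw [h1, mul_one]
  rw [show (fun x : ℝ => F x * G x) = fun x : ℝ => |x| ^ j * ‖g x‖ from funext hFG] at hCS
  rw [show (fun x : ℝ => F x ^ 2) = fun x : ℝ => x ^ (2 * j) * Real.exp (-(2 * a * π) * x ^ 2)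
    from funext hsq] at hCS
  rw [show (fun x : ℝ => G x ^ 2) = fun x : ℝ => ‖g x‖ ^ 2 * Real.exp (2 * a * π * x ^ 2)
    from funext hGsq] at hCS
  have hKey : ∫ x : ℝ, |x| ^ j * ‖g x‖ ≤ K * C ^ ((1:ℝ)/2) := by
    refine hCS.trans ?_
    apply mul_le_mul_of_nonneg_right (sqrt_moment_le ha0 j)
    exact Real.rpow_nonneg hC0 _
  have hb1 : ‖𝓕 (fun x : ℝ => (-2 * ↑π * I * ↑x : ℂ) ^ j • g x) ξ‖ ≤
      ∫ x : ℝ, ‖(-2 * ↑π * I * ↑x : ℂ) ^ j • g x‖ :=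
    VectorFourier.norm_fourierIntegral_le_integral_norm _ _ _ _ _
  have hnorm : ∀ x : ℝ, ‖(-2 * ↑π * I * ↑x : ℂ) ^ j • g x‖ = (2 * π) ^ j * (|x| ^ j * ‖g x‖) := by
    intro x
    rw [norm_smul, norm_pow]
    have h1 : ‖(-2 * ↑π * I * ↑x : ℂ)‖ = (2 * π) * |x| := by
      simp [norm_mul, abs_of_pos Real.pi_pos]
    rw [h1, mul_pow]
    ring
  have hL1 : ∫ x : ℝ, ‖(-2 * ↑π * I * ↑x : ℂ) ^ j • g x‖
      = (2 * π) ^ j * ∫ x : ℝ, |x| ^ j * ‖g x‖ := by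
    rw [← integral_const_mul]
    exact integral_congr_ae (Filter.Eventually.of_forall hnorm)
  calc ‖𝓕 (fun x : ℝ => (-2 * ↑π * I * ↑x : ℂ) ^ j • g x) ξ‖
      ≤ ∫ x : ℝ, ‖(-2 * ↑π * I * ↑x : ℂ) ^ j • g x‖ := hb1
    _ = (2 * π) ^ j * ∫ x : ℝ, |x| ^ j * ‖g x‖ := hL1
    _ ≤ (2 * π) ^ j * (K * C ^ ((1:ℝ)/2)) := by
        apply mul_le_mul_of_nonneg_left hKey (by positivity)
    _ = (2 * π) ^ j * K * C ^ ((1:ℝ)/2) := by ring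


open MeasureTheory Real

/-- uniform bounds on all derivatives of `f` and `f̂` for a Schwartz function in
the Gaussian-weighted class: `‖D^j f‖_∞ ≤ (2π)^j A_j C_a(f̂)` and
`‖D^j f̂‖_∞ ≤ (2π)^j A_j C_a(f)`, where
`A_j = 2^{-j} a^{-j/2} √((2j-1)‼) (2a)^{-1/4}`. -/
theorem stmt_4 (a : ℝ) (ha0 : 0 < a) (ha1 : a < 1) (f : SchwartzMap ℝ ℂ)
    (hCf : Integrable (fun x : ℝ => ‖f x‖ ^ 2 * Real.exp (2 * a * π * x ^ 2)))
    (hCfhat : Integrable (fun ξ : ℝ =>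
      ‖FourierTransform.fourier (⇑f : ℝ → ℂ) ξ‖ ^ 2 * Real.exp (2 * a * π * ξ ^ 2))) :
    ∀ j : ℕ,
      (∀ x : ℝ, ‖iteratedDeriv j (⇑f) x‖ ≤
        (2 * π) ^ j *
          ((2 : ℝ) ^ (-(j : ℝ)) * a ^ (-(j : ℝ) / 2) *
            Real.sqrt ((Nat.doubleFactorial (2 * j - 1) : ℝ)) * (2 * a) ^ (-(1 : ℝ) / 4)) *
          (∫ ξ : ℝ, ‖FourierTransform.fourier (⇑f : ℝ → ℂ) ξ‖ ^ 2 *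
            Real.exp (2 * a * π * ξ ^ 2)) ^ ((1 : ℝ) / 2)) ∧
      (∀ ξ : ℝ, ‖iteratedDeriv j (FourierTransform.fourier (⇑f : ℝ → ℂ)) ξ‖ ≤
        (2 * π) ^ j *
          ((2 : ℝ) ^ (-(j : ℝ)) * a ^ (-(j : ℝ) / 2) *
            Real.sqrt ((Nat.doubleFactorial (2 * j - 1) : ℝ)) * (2 * a) ^ (-(1 : ℝ) / 4)) *
          (∫ x : ℝ, ‖f x‖ ^ 2 * Real.exp (2 * a * π * x ^ 2)) ^ ((1 : ℝ) / 2)) := by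
  intro j
  have hFs : (𝓕 ⇑f) = ⇑(SchwartzMap.fourierTransformCLM ℂ f) :=
    by rw [SchwartzMap.fourierTransformCLM_apply, SchwartzMap.fourier_coe]
  have hFf : Integrable (𝓕 ⇑f) := by
    rw [hFs]; exact SchwartzMap.integrable _
  constructor
  · intro x
    have hginv : ⇑f = fun y : ℝ => 𝓕 (𝓕 ⇑f) (-y) := by
      have h := f.continuous.fourierInv_fourier_eq f.integrable hFf
      funext y
      rw [← Real.fourierInv_eq_fourier_neg]
      exact (congrFun h y).symm
    have hid : iteratedDeriv j (⇑f) x = (-1 : ℝ) ^ j • iteratedDeriv j (𝓕 (𝓕 ⇑f)) (-x) := by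
      conv_lhs => rw [hginv]
      exact iteratedDeriv_comp_neg j (𝓕 (𝓕 ⇑f)) x
    have hmas := master ha0 j (𝓕 ⇑f)
      (fun n => by rw [hFs]; exact schwartz_pow_smul_integrable _ n) hCfhat (-x)
    calc ‖iteratedDeriv j (⇑f) x‖ = ‖iteratedDeriv j (𝓕 (𝓕 ⇑f)) (-x)‖ := by
          rw [hid, norm_smul]
          simp
      _ ≤ _ := hmas
  · intro ξ
    exact master ha0 j ⇑f (schwartz_pow_smul_integrable f) hCf ξ
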